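/- Let R be a Noetherian unique factorization domain and let M and N be finitely generated torsion R-modules (i.e., every element is annihilated by some nonzero element of R). If there exists a pseudo-isomorphism f : M → N, then there exists a pseudo-isomorphism g : N → M. Consequently, pseudo-isomorphism is an equivalence relation on the class of finitely generated torsion R-modules. -/

import Mathlib

set_option linter.unusedSectionVars false
set_option maxHeartbeats 1000000

/-- A module `M` over `R` is pseudo-null if its localization at every height-one
prime ideal of `R` vanishes. -/
def IsPseudoNull (R : Type*) [CommRing R] (M : Type*) [AddCommGroup M] [Module R M] : Prop :=
  ∀ P : PrimeSpectrum R, Order.height P = 1 →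
    Subsingleton (LocalizedModule P.asIdeal.primeCompl M)

/-- A linear map is a pseudo-isomorphism if its kernel and cokernel are pseudo-null. -/
def IsPseudoIsom (R : Type*) [CommRing R] {M N : Type*} [AddCommGroup M] [Module R M]
    [AddCommGroup N] [Module R N] (f : M →ₗ[R] N) : Prop :=
  IsPseudoNull R (LinearMap.ker f) ∧ IsPseudoNull R (N ⧸ LinearMap.range f)

section Helpers

variable {R : Type*} [CommRing R] {M N L : Type*} [AddCommGroup M] [Module R M]
  [AddCommGroup N] [Module R N] [AddCommGroup L] [Module R L] (S : Submonoid R)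

lemma PseudoAux.mk_eq_zero_iff {m : M} {s : S} :
    (LocalizedModule.mk m s : LocalizedModule S M) = 0 ↔ ∃ u : S, (u : R) • m = 0 := by
  rw [← LocalizedModule.zero_mk (1 : S), LocalizedModule.mk_eq]
  constructor
  · rintro ⟨u, hu⟩
    exact ⟨u, by simpa [Submonoid.smul_def] using hu⟩
  · rintro ⟨u, hu⟩
    exact ⟨u, by simpa [Submonoid.smul_def] using hu⟩

lemma PseudoAux.subsingleton_of_ann {s : R} (hs : s ∈ S) (h : ∀ m : M, s • m = 0) :
    Subsingleton (LocalizedModule S M) := by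
  have key : ∀ z : LocalizedModule S M, z = 0 := by
    intro z
    refine LocalizedModule.induction_on (fun m t => ?_) z
    rw [PseudoAux.mk_eq_zero_iff]
    exact ⟨⟨s, hs⟩, h m⟩
  exact ⟨fun a b => (key a).trans (key b).symm⟩

lemma PseudoAux.injective_map_of_subsingleton_ker (g : M →ₗ[R] N)
    (hs : Subsingleton (LocalizedModule S (LinearMap.ker g))) :
    Function.Injective (LocalizedModule.map S g) := by
  have key : ∀ x : LocalizedModule S M, LocalizedModule.map S g x = 0 → x = 0 := by
    intro x
    refine LocalizedModule.induction_on (fun m t hx => ?_) x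
    rw [LocalizedModule.map_mk, PseudoAux.mk_eq_zero_iff] at hx
    obtain ⟨u, hu⟩ := hx
    have hmem : (u : R) • m ∈ LinearMap.ker g := by
      rw [LinearMap.mem_ker, map_smul]; exact hu
    have h0 : (LocalizedModule.mk (⟨(u : R) • m, hmem⟩ : LinearMap.ker g) 1 :
        LocalizedModule S (LinearMap.ker g)) = 0 := Subsingleton.elim _ _
    rw [PseudoAux.mk_eq_zero_iff] at h0
    obtain ⟨v, hv⟩ := h0
    have hv' : ((v : R) * (u : R)) • m = 0 := by
      have := congrArg Subtype.val hv
      simpa [mul_smul] using this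
    rw [PseudoAux.mk_eq_zero_iff]
    exact ⟨v * u, by simpa [mul_smul] using hv'⟩
  intro x y hxy
  have h0 : LocalizedModule.map S g (x - y) = 0 := by rw [map_sub, hxy, sub_self]
  exact sub_eq_zero.mp (key _ h0)

lemma PseudoAux.surjective_map_of_subsingleton_coker (g : M →ₗ[R] N)
    (hs : Subsingleton (LocalizedModule S (N ⧸ LinearMap.range g))) :
    Function.Surjective (LocalizedModule.map S g) := by
  intro y
  refine LocalizedModule.induction_on (fun n t => ?_) y
  have h0 : (LocalizedModule.mk (Submodule.Quotient.mk n : N ⧸ LinearMap.range g) 1 :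
      LocalizedModule S (N ⧸ LinearMap.range g)) = 0 := Subsingleton.elim _ _
  rw [PseudoAux.mk_eq_zero_iff] at h0
  obtain ⟨u, hu⟩ := h0
  have hmem : (u : R) • n ∈ LinearMap.range g := by
    have hu' : (Submodule.Quotient.mk ((u : R) • n) : N ⧸ LinearMap.range g) = 0 := by
      rw [Submodule.Quotient.mk_smul]; exact hu
    exact (Submodule.Quotient.mk_eq_zero _).mp hu'
  obtain ⟨m, hm⟩ := hmem
  refine ⟨LocalizedModule.mk m (u * t), ?_⟩
  rw [LocalizedModule.map_mk, hm]
  have : ((u : R) • n) = (u • n : N) := rfl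
  rw [this]
  exact LocalizedModule.mk_cancel_common_left u t n

lemma PseudoAux.subsingleton_ker_of_injective (g : M →ₗ[R] N)
    (h : Function.Injective (LocalizedModule.map S g)) :
    Subsingleton (LocalizedModule S (LinearMap.ker g)) := by
  have key : ∀ z : LocalizedModule S (LinearMap.ker g), z = 0 := by
    intro z
    refine LocalizedModule.induction_on (fun k t => ?_) z
    have h1 : LocalizedModule.map S g (LocalizedModule.mk ((k : M)) t) = 0 := by
      rw [LocalizedModule.map_mk]
      have hk : g (k : M) = 0 := k.2
      rw [hk, LocalizedModule.zero_mk]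
    have h2 : (LocalizedModule.mk ((k : M)) t : LocalizedModule S M) = 0 := by
      apply h; rw [h1, map_zero]
    rw [PseudoAux.mk_eq_zero_iff] at h2 ⊢
    obtain ⟨u, hu⟩ := h2
    exact ⟨u, Subtype.ext (by simpa using hu)⟩
  exact ⟨fun a b => (key a).trans (key b).symm⟩

lemma PseudoAux.subsingleton_coker_of_surjective (g : M →ₗ[R] N)
    (h : Function.Surjective (LocalizedModule.map S g)) :
    Subsingleton (LocalizedModule S (N ⧸ LinearMap.range g)) := by
  have key : ∀ z : LocalizedModule S (N ⧸ LinearMap.range g), z = 0 := by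
    intro z
    refine LocalizedModule.induction_on (fun q t => ?_) z
    obtain ⟨n, rfl⟩ := Submodule.Quotient.mk_surjective _ q
    obtain ⟨x, hx⟩ := h (LocalizedModule.mk n 1)
    revert hx
    refine LocalizedModule.induction_on (fun m u hx => ?_) x
    rw [LocalizedModule.map_mk, LocalizedModule.mk_eq] at hx
    obtain ⟨v, hv⟩ := hx
    rw [PseudoAux.mk_eq_zero_iff]
    refine ⟨v * u, ?_⟩
    have hmem : (((v * u : S) : R)) • n ∈ LinearMap.range g := by
      refine ⟨(v : R) • m, ?_⟩
      have hv' : (v : R) • g m = ((v : R) * (u : R)) • n := by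
        simpa [Submonoid.smul_def, mul_smul] using hv
      rw [map_smul, hv']
      rfl
    rw [← Submodule.Quotient.mk_smul, Submodule.Quotient.mk_eq_zero]
    exact hmem
  exact ⟨fun a b => (key a).trans (key b).symm⟩

lemma PseudoAux.isPseudoIsom_iff_bijective (g : M →ₗ[R] N) :
    IsPseudoIsom R g ↔ ∀ P : PrimeSpectrum R, Order.height P = 1 →
      Function.Bijective (LocalizedModule.map P.asIdeal.primeCompl g) := by
  constructor
  · rintro ⟨h1, h2⟩ P hP
    exact ⟨PseudoAux.injective_map_of_subsingleton_ker _ g (h1 P hP),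
      PseudoAux.surjective_map_of_subsingleton_coker _ g (h2 P hP)⟩
  · intro hb
    exact ⟨fun P hP => PseudoAux.subsingleton_ker_of_injective _ g (hb P hP).1,
      fun P hP => PseudoAux.subsingleton_coker_of_surjective _ g (hb P hP).2⟩

lemma PseudoAux.map_comp_apply (f : M →ₗ[R] N) (g : N →ₗ[R] L)
    (x : LocalizedModule S M) :
    LocalizedModule.map S (g ∘ₗ f) x = LocalizedModule.map S g (LocalizedModule.map S f x) := by
  refine LocalizedModule.induction_on (fun m t => ?_) x
  simp

end Helpers

section Height

variable {R : Type*} [CommRing R] [IsDomain R] [UniqueFactorizationMonoid R]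

lemma PseudoAux.prime_lt_span_eq_bot {p : R} (hp : Prime p)
    {Q : Ideal R} (hQ : Q.IsPrime) (hlt : Q < Ideal.span {p}) : Q = ⊥ := by
  have hpQ : p ∉ Q := by
    intro hmem
    exact hlt.ne (le_antisymm hlt.le
      (by rwa [Ideal.span_le, Set.singleton_subset_iff]))
  have key : ∀ x : R, x ∈ Q → x = 0 := by
    intro x
    refine WellFounded.induction (wellFounded_dvdNotUnit)
      (C := fun x : R => x ∈ Q → x = 0) x ?_
    intro x IH hxQ
    by_contra hx0
    obtain ⟨y, rfl⟩ : p ∣ x := Ideal.mem_span_singleton.mp (hlt.le hxQ)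
    have hyQ : y ∈ Q := (hQ.mem_or_mem hxQ).resolve_left hpQ
    have hy0 : y ≠ 0 := fun h => hx0 (by rw [h, mul_zero])
    exact hy0 (IH y ⟨hy0, p, hp.not_unit, mul_comm p y⟩ hyQ)
  exact (Submodule.eq_bot_iff Q).mpr key

lemma PseudoAux.height_span_prime {p : R} (hp : Prime p)
    (P : PrimeSpectrum R) (hP : P.asIdeal = Ideal.span {p}) : Order.height P = 1 := by
  have hspan_ne : Ideal.span {p} ≠ (⊥ : Ideal R) := by
    simp [Ideal.span_singleton_eq_bot, hp.ne_zero]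
  apply le_antisymm
  · rw [Order.height_le_iff']
    intro s hlast
    by_contra hlen
    have h2 : 2 ≤ s.length := by
      by_contra h
      push_neg at h
      interval_cases h' : s.length <;> simp_all
    have hi1 : s.length - 1 < s.length + 1 := by omega
    have hi0 : s.length - 2 < s.length + 1 := by omega
    set a := s ⟨s.length - 1, hi1⟩ with ha
    set b := s ⟨s.length - 2, hi0⟩ with hb
    have haP : a < P := by
      rw [← hlast]
      apply s.strictMono
      show (⟨s.length - 1, hi1⟩ : Fin _) < Fin.last s.length
      simp [Fin.lt_def]; omega
    have hba : b < a := by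
      apply s.strictMono
      simp [Fin.lt_def]; omega
    have haI : a.asIdeal < Ideal.span {p} := by
      rw [← hP]
      exact (PrimeSpectrum.asIdeal_lt_asIdeal a P).mpr haP
    have hbot : a.asIdeal = ⊥ := PseudoAux.prime_lt_span_eq_bot hp a.2 haI
    have hblt : b.asIdeal < (⊥ : Ideal R) := by
      rw [← hbot]
      exact (PrimeSpectrum.asIdeal_lt_asIdeal b a).mpr hba
    exact not_lt_bot hblt
  · let x0 : PrimeSpectrum R := ⟨⊥, Ideal.bot_prime⟩
    have hlt : x0 < P := by
      rw [← PrimeSpectrum.asIdeal_lt_asIdeal, hP]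
      exact hspan_ne.bot_lt
    let s : LTSeries (PrimeSpectrum R) := (RelSeries.singleton _ x0).snoc P
      (by rwa [RelSeries.last_singleton])
    have hlen : s.length = 1 := rfl
    have hlast : s.last = P := RelSeries.last_snoc _ _ _
    have := Order.length_le_height_last (p := s)
    rw [hlast, hlen] at this
    exact_mod_cast this

lemma PseudoAux.span_singleton_of_height_one {p : R} (hp : Prime p)
    (P : PrimeSpectrum R) (hP : Order.height P = 1) (hmem : p ∈ P.asIdeal) :
    P.asIdeal = Ideal.span {p} := by
  have hle : Ideal.span {p} ≤ P.asIdeal := by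
    rwa [Ideal.span_le, Set.singleton_subset_iff]
  by_contra hne
  have hlt2 : Ideal.span {p} < P.asIdeal := lt_of_le_of_ne hle (fun h => hne h.symm)
  let x0 : PrimeSpectrum R := ⟨⊥, Ideal.bot_prime⟩
  let x1 : PrimeSpectrum R := ⟨Ideal.span {p},
    (Ideal.span_singleton_prime hp.ne_zero).mpr hp⟩
  have h01 : x0 < x1 := by
    rw [← PrimeSpectrum.asIdeal_lt_asIdeal]
    exact (by simp [Ideal.span_singleton_eq_bot, hp.ne_zero] :
      Ideal.span {p} ≠ (⊥ : Ideal R)).bot_lt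
  have h12 : x1 < P := by
    rw [← PrimeSpectrum.asIdeal_lt_asIdeal]
    exact hlt2
  let s : LTSeries (PrimeSpectrum R) :=
    ((RelSeries.singleton _ x0).snoc x1 (by rwa [RelSeries.last_singleton])).snoc P
      (by rwa [RelSeries.last_snoc])
  have hlen : s.length = 2 := rfl
  have hlast : s.last = P := RelSeries.last_snoc _ _ _
  have := Order.length_le_height_last (p := s)
  rw [hlast, hlen, hP] at this
  norm_num at this

end Height

section Symmetry

variable {R : Type*} [CommRing R] [IsDomain R] [IsNoetherianRing R]
  [UniqueFactorizationMonoid R]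
  {M N : Type*} [AddCommGroup M] [Module R M] [Module.Finite R M]
  [AddCommGroup N] [Module R N] [Module.Finite R N]

lemma PseudoAux.exists_ann (hM : Module.IsTorsion R M) :
    ∃ a : R, a ≠ 0 ∧ ∀ m : M, a • m = 0 := by
  have h' := Submodule.annihilator_top_inter_nonZeroDivisors (R := R) (M := M) hM
  obtain ⟨a, haann, hareg⟩ := h'
  refine ⟨a, nonZeroDivisors.ne_zero hareg, fun m => ?_⟩
  exact Submodule.mem_annihilator.mp haann m Submodule.mem_top

lemma PseudoAux.exists_pseudo_inverse
    (hM : Module.IsTorsion R M) (hN : Module.IsTorsion R N)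
    (f : M →ₗ[R] N) (hf : IsPseudoIsom R f) :
    ∃ g : N →ₗ[R] M, IsPseudoIsom R g := by
  classical
  haveI : Module.FinitePresentation R M := Module.finitePresentation_of_finite R M
  haveI : Module.FinitePresentation R N := Module.finitePresentation_of_finite R N
  obtain ⟨a, ha0, haM⟩ := PseudoAux.exists_ann hM
  obtain ⟨b, hb0, hbN⟩ := PseudoAux.exists_ann hN
  set c := a * b with hc
  have hc0 : c ≠ 0 := mul_ne_zero ha0 hb0
  have hcM : ∀ m : M, c • m = 0 := fun m => by
    rw [hc, mul_comm, mul_smul, haM, smul_zero]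
  have hcN : ∀ n : N, c • n = 0 := fun n => by
    rw [hc, mul_smul, hbN, smul_zero]
  letI : NormalizationMonoid R := UniqueFactorizationMonoid.normalizationMonoid.toNormalizationMonoid
  set T : Finset R := (UniqueFactorizationMonoid.normalizedFactors c).toFinset with hT
  have hTprime : ∀ p ∈ T, Prime p := fun p hp =>
    UniqueFactorizationMonoid.prime_of_normalized_factor p (Multiset.mem_toFinset.mp hp)
  have hTdvd : ∀ p ∈ T, ∀ r ∈ T, p ∣ r → p = r := by
    intro p hp r hr hd
    have h1 := UniqueFactorizationMonoid.normalize_normalized_factor p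
      (Multiset.mem_toFinset.mp hp)
    have h2 := UniqueFactorizationMonoid.normalize_normalized_factor r
      (Multiset.mem_toFinset.mp hr)
    have hassoc : Associated p r :=
      (hTprime p hp).irreducible.associated_of_dvd (hTprime r hr).irreducible hd
    rw [← h1, ← h2]
    exact normalize_eq_normalize hassoc.dvd hassoc.symm.dvd
  have hbad : ∀ P : PrimeSpectrum R, Order.height P = 1 → c ∈ P.asIdeal →
      ∃ p, ∃ hp : p ∈ T, P.asIdeal = Ideal.span {p} := by
    intro P hP hcP
    have hprodP : (UniqueFactorizationMonoid.normalizedFactors c).prod ∈ P.asIdeal := by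
      obtain ⟨u, hu⟩ := (UniqueFactorizationMonoid.prod_normalizedFactors hc0).symm
      rw [← hu]
      exact Ideal.mul_mem_right _ _ hcP
    obtain ⟨p, hpmem, hpP⟩ := (P.isPrime.multiset_prod_mem_iff_exists_mem _).mp hprodP
    exact ⟨p, Multiset.mem_toFinset.mpr hpmem,
      PseudoAux.span_singleton_of_height_one
        (UniqueFactorizationMonoid.prime_of_normalized_factor p hpmem) P hP hpP⟩
  have hfbij := (PseudoAux.isPseudoIsom_iff_bijective f).mp hf
  have key : ∀ p, ∀ hpT : p ∈ T, ∃ hp : N →ₗ[R] M,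
      Function.Bijective (LocalizedModule.map (@Ideal.primeCompl R _ (Ideal.span {p})
        ((Ideal.span_singleton_prime (hTprime p hpT).ne_zero).mpr (hTprime p hpT))) hp) := by
    intro p hpT
    have hp := hTprime p hpT
    haveI hPrime : (Ideal.span {p}).IsPrime := (Ideal.span_singleton_prime hp.ne_zero).mpr hp
    set P : PrimeSpectrum R := ⟨Ideal.span {p}, hPrime⟩ with hPdef
    set S : Submonoid R := (Ideal.span {p}).primeCompl with hSdef
    show ∃ hp : N →ₗ[R] M, Function.Bijective (LocalizedModule.map S hp)
    have hbijf : Function.Bijective (LocalizedModule.map S f) :=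
      hfbij P (PseudoAux.height_span_prime hp P rfl)
    set e := LinearEquiv.ofBijective (LocalizedModule.map S f) hbijf with hedef
    obtain ⟨h, s, hs⟩ := Module.FinitePresentation.exists_lift_of_isLocalizedModule
      (S := S) (f := LocalizedModule.mkLinearMap S M)
      ((e.symm.toLinearMap.restrictScalars R) ∘ₗ LocalizedModule.mkLinearMap S N)
    refine ⟨h, ?_⟩
    show Function.Bijective ⇑(LocalizedModule.map S h)
    have hEq : ((LocalizedModule.map S h).restrictScalars R) =
        (s : R) • (e.symm.toLinearMap.restrictScalars R) := by
      apply IsLocalizedModule.ext S (LocalizedModule.mkLinearMap S N)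
        (IsLocalizedModule.map_units (LocalizedModule.mkLinearMap S M))
      refine LinearMap.ext fun n => ?_
      have h1 := LinearMap.congr_fun hs n
      simpa [Submonoid.smul_def] using h1
    have hfun : ⇑(LocalizedModule.map S h) = fun x => (s : R) • e.symm x := by
      funext x
      have h1 := LinearMap.congr_fun hEq x
      simpa using h1
    rw [hfun]
    have hsmul : Function.Bijective (fun x : LocalizedModule S M => (s : R) • x) := by
      have hu := (Module.End.isUnit_iff _).mp
        (IsLocalizedModule.map_units (LocalizedModule.mkLinearMap S M) s)
      have heq : (fun x : LocalizedModule S M => (s : R) • x) =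
          ⇑(algebraMap R (Module.End R (LocalizedModule S M)) (s : R)) := by
        funext x; simp [Module.algebraMap_end_apply]
      rw [heq]; exact hu
    exact hsmul.comp e.symm.bijective
  choose hmap hmapbij using key
  refine ⟨∑ p ∈ T.attach, (∏ r ∈ T.erase (p : R), r) • hmap p.1 p.2,
    (PseudoAux.isPseudoIsom_iff_bijective _).mpr ?_⟩
  intro P hP
  by_cases hcP : c ∈ P.asIdeal
  · obtain ⟨p₀, hp₀T, hPspan⟩ := hbad P hP hcP
    obtain ⟨PI, hPI⟩ := P
    replace hPspan : PI = Ideal.span {p₀} := hPspan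
    subst hPspan
    haveI hPrime0 : (Ideal.span {p₀}).IsPrime := hPI
    set S : Submonoid R := (Ideal.span {p₀}).primeCompl with hS
    set A := Localization S with hA
    haveI : IsNoetherianRing A := IsLocalization.isNoetherianRing S A inferInstance
    set g : N →ₗ[R] M := ∑ p ∈ T.attach, (∏ r ∈ T.erase (p : R), r) • hmap p.1 p.2 with hgdef
    show Function.Bijective (LocalizedModule.map S g)
    have hgsum : ∀ z : LocalizedModule S N, LocalizedModule.map S g z =
        ∑ p ∈ T.attach, (∏ r ∈ T.erase (p : R), r) •
          (LocalizedModule.map S (hmap p.1 p.2) z) := by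
      intro z
      rw [hgdef, map_sum, LinearMap.sum_apply]
      refine Finset.sum_congr rfl fun p _ => ?_
      rw [map_smul, LinearMap.smul_apply]
    set a₀ : R := ∏ r ∈ T.erase p₀, r with ha₀
    have ha₀S : a₀ ∈ S := by
      show a₀ ∉ Ideal.span {p₀}
      intro hmem
      have hdvd : p₀ ∣ a₀ := Ideal.mem_span_singleton.mp hmem
      obtain ⟨r, hrmem, hrdvd⟩ := (hTprime p₀ hp₀T).exists_mem_finset_dvd hdvd
      have hrT : r ∈ T := Finset.mem_of_mem_erase hrmem
      have heq : p₀ = r := hTdvd p₀ hp₀T r hrT hrdvd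
      exact (Finset.mem_erase.mp hrmem).1 heq.symm
    have hmainbij : Function.Bijective
        (LocalizedModule.map S (hmap p₀ hp₀T)) := hmapbij p₀ hp₀T
    haveI : Module.Finite A (LocalizedModule S M) := inferInstance
    haveI : Module.Finite A (LocalizedModule S N) := inferInstance
    have hsurj : Function.Surjective (LocalizedModule.map S g) := by
      rw [← LinearMap.range_eq_top]
      have hfg : (⊤ : Submodule A (LocalizedModule S M)).FG :=
        Module.finite_def.mp inferInstance
      have hle : (⊤ : Submodule A (LocalizedModule S M)) ≤
          LinearMap.range (LocalizedModule.map S g) ⊔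
          (IsLocalRing.maximalIdeal A) • (⊤ : Submodule A (LocalizedModule S M)) := by
        rintro x -
        have hu := (Module.End.isUnit_iff _).mp
          (IsLocalizedModule.map_units (LocalizedModule.mkLinearMap S M) ⟨a₀, ha₀S⟩)
        obtain ⟨x', hx'⟩ := hu.2 x
        obtain ⟨y, hy⟩ := hmainbij.2 x'
        have hx'' : a₀ • x' = x := by
          rw [← hx']; simp [Module.algebraMap_end_apply]
        have hsum := hgsum y
        rw [← Finset.sum_erase_add _ _ (Finset.mem_attach T ⟨p₀, hp₀T⟩)] at hsum
        have hrest : (∑ p ∈ T.attach.erase ⟨p₀, hp₀T⟩, (∏ r ∈ T.erase (p : R), r) •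
            (LocalizedModule.map S (hmap p.1 p.2) y)) ∈
            (IsLocalRing.maximalIdeal A) • (⊤ : Submodule A (LocalizedModule S M)) := by
          refine Submodule.sum_mem _ fun p hp => ?_
          have hpne : (p : R) ≠ p₀ := by
            intro hpe
            exact (Finset.mem_erase.mp hp).1 (Subtype.ext hpe)
          have hdvd : p₀ ∣ ∏ r ∈ T.erase (p : R), r :=
            Finset.dvd_prod_of_mem _ (Finset.mem_erase.mpr ⟨Ne.symm hpne, hp₀T⟩)
          have hmemI : (∏ r ∈ T.erase (p : R), r) ∈ Ideal.span {p₀} :=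
            Ideal.mem_span_singleton.mpr hdvd
          have hsm : (∏ r ∈ T.erase (p : R), r) •
              (LocalizedModule.map S (hmap p.1 p.2) y) =
              (algebraMap R A (∏ r ∈ T.erase (p : R), r)) •
              (LocalizedModule.map S (hmap p.1 p.2) y) := (algebraMap_smul A _ _).symm
          rw [hsm]
          refine Submodule.smul_mem_smul ?_ Submodule.mem_top
          exact (IsLocalization.AtPrime.to_map_mem_maximal_iff A
            (Ideal.span {p₀}) _).mpr hmemI
        have hxeq : x = LocalizedModule.map S g y -
            (∑ p ∈ T.attach.erase ⟨p₀, hp₀T⟩, (∏ r ∈ T.erase (p : R), r) •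
            (LocalizedModule.map S (hmap p.1 p.2) y)) := by
          rw [hsum, hy, hx'']
          abel
        rw [hxeq]
        exact Submodule.sub_mem _
          (Submodule.mem_sup_left (LinearMap.mem_range_self _ _))
          (Submodule.mem_sup_right hrest)
      have hconc := Submodule.le_of_le_smul_of_le_jacobson_bot hfg
        (IsLocalRing.maximalIdeal_le_jacobson ⊥) hle
      exact top_le_iff.mp hconc
    have hbf : Function.Bijective (LocalizedModule.map S f) :=
      hfbij ⟨Ideal.span {p₀}, hPI⟩ hP
    have hendo : Function.Surjective
        ⇑((LocalizedModule.map S f) ∘ₗ (LocalizedModule.map S g)) := by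
      rw [LinearMap.coe_comp]; exact hbf.2.comp hsurj
    haveI : OrzechProperty A := inferInstance
    have hinj := OrzechProperty.injective_of_surjective_endomorphism
      ((LocalizedModule.map S f) ∘ₗ (LocalizedModule.map S g)) hendo
    refine ⟨fun x y hxy => hinj ?_, hsurj⟩
    simp only [LinearMap.coe_comp, Function.comp_apply, hxy]
  · haveI hsM : Subsingleton (LocalizedModule P.asIdeal.primeCompl M) :=
      PseudoAux.subsingleton_of_ann _ hcP hcM
    haveI hsN : Subsingleton (LocalizedModule P.asIdeal.primeCompl N) :=
      PseudoAux.subsingleton_of_ann _ hcP hcN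
    exact ⟨fun x y _ => Subsingleton.elim x y, fun x => ⟨0, Subsingleton.elim _ _⟩⟩

end Symmetry

/-- Over a Noetherian UFD, if there is a pseudo-isomorphism `M → N` between finitely
generated torsion modules then there is one `N → M`. Consequently — together with
reflexivity and transitivity, also stated — pseudo-isomorphism is an equivalence relation
on finitely generated torsion modules. -/
theorem stmt_2 (R : Type*) [CommRing R] [IsDomain R] [IsNoetherianRing R]
    [UniqueFactorizationMonoid R]
    (M N : Type*) [AddCommGroup M] [Module R M] [Module.Finite R M]
    [AddCommGroup N] [Module R N] [Module.Finite R N]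
    (hM : Module.IsTorsion R M) (hN : Module.IsTorsion R N)
    (h : ∃ f : M →ₗ[R] N, IsPseudoIsom R f) :
    (∃ g : N →ₗ[R] M, IsPseudoIsom R g) ∧
    -- reflexivity
    (∀ (P : Type*) [AddCommGroup P] [Module R P] [Module.Finite R P],
      Module.IsTorsion R P → ∃ f : P →ₗ[R] P, IsPseudoIsom R f) ∧
    -- transitivity
    (∀ (P Q S : Type*) [AddCommGroup P] [Module R P] [Module.Finite R P]
        [AddCommGroup Q] [Module R Q] [Module.Finite R Q]
        [AddCommGroup S] [Module R S] [Module.Finite R S],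
      Module.IsTorsion R P → Module.IsTorsion R Q → Module.IsTorsion R S →
      (∃ f : P →ₗ[R] Q, IsPseudoIsom R f) → (∃ g : Q →ₗ[R] S, IsPseudoIsom R g) →
      ∃ h : P →ₗ[R] S, IsPseudoIsom R h) := by
  refine ⟨?_, ?_, ?_⟩
  · obtain ⟨f, hf⟩ := h
    exact PseudoAux.exists_pseudo_inverse hM hN f hf
  · intro P _ _ _ _
    refine ⟨LinearMap.id, (PseudoAux.isPseudoIsom_iff_bijective _).mpr fun Q hQ => ?_⟩
    rw [LocalizedModule.map_id]
    exact Function.bijective_id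
  · intro P Q S _ _ _ _ _ _ _ _ _ _ _ _ ⟨f, hf⟩ ⟨g, hg⟩
    refine ⟨g ∘ₗ f, (PseudoAux.isPseudoIsom_iff_bijective _).mpr fun Pt hPt => ?_⟩
    have hcoe : ⇑(LocalizedModule.map Pt.asIdeal.primeCompl (g ∘ₗ f)) =
        ⇑(LocalizedModule.map Pt.asIdeal.primeCompl g) ∘
        ⇑(LocalizedModule.map Pt.asIdeal.primeCompl f) :=
      funext (PseudoAux.map_comp_apply _ f g)
    rw [hcoe]
    exact ((PseudoAux.isPseudoIsom_iff_bijective g).mp hg Pt hPt).comp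
      ((PseudoAux.isPseudoIsom_iff_bijective f).mp hf Pt hPt)
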